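/- arXiv:1503.05225 — 2 statements merged into one kernel-verified Lean document; each statement's English description precedes it below -/
import Mathlib

section
/- (Multiplicative embedding of χ² into ℓ₂²) There is an absolute constant C > 0 such that for every integer d ≥ 1, every ε ∈ (0,1), and every finite set P ⊆ Δ_d with |P| = n ≥ 2, there exist an integer m ≤ C·n²·d³/ε² and a map φ : P → ℝ^m such that for all p, q ∈ P: (1−ε)·χ²(p,q) ≤ ‖φ(p) − φ(q)‖₂² ≤ (1+ε)·χ²(p,q). -/
open MeasureTheory


open Real

/-- One-dimensional symmetrized χ² divergence (with `f_χ(0,0) = 0`,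
which holds automatically since `0/0 = 0` in Lean). -/
noncomputable def fChi (x y : ℝ) : ℝ := (x - y) ^ 2 / (x + y)

/-- The symmetrized χ² divergence on the simplex `Δ_d`. -/
noncomputable def chiSq {d : ℕ} (p q : Fin d → ℝ) : ℝ := ∑ i, fChi (p i) (q i)


noncomputable def Sker {d : ℕ} (p q : Fin d → ℝ) : ℝ := ∑ i, p i * q i / (p i + q i)


lemma my_integral_exp_neg_mul {s : ℝ} (hs : 0 < s) :
    ∫ t in Set.Ioi (0:ℝ), Real.exp (-(s * t)) = 1 / s := by
  have h := integral_comp_mul_left_Ioi (fun u => Real.exp (-u)) 0 hs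
  simp only [mul_zero, integral_exp_neg_Ioi_zero, smul_eq_mul, mul_one] at h
  rw [h]; rw [one_div]

lemma harmonic_psd {n : ℕ} (x c : Fin n → ℝ) (hx : ∀ j, 0 ≤ x j) :
    0 ≤ ∑ j, ∑ k, c j * c k * (x j * x k / (x j + x k)) := by
  set f : Fin n → ℝ → ℝ := fun j t => c j * x j * Real.exp (-(x j * t)) with hf
  have key : ∀ j k : Fin n, IntegrableOn (fun t => f j t * f k t) (Set.Ioi 0) ∧
      ∫ t in Set.Ioi (0:ℝ), f j t * f k t = c j * c k * (x j * x k / (x j + x k)) := by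
    intro j k
    rcases eq_or_lt_of_le (add_nonneg (hx j) (hx k)) with h | h
    · have hj : x j = 0 := by
        have := hx j; have := hx k; linarith
      have hzero : (fun t => f j t * f k t) = fun _ => (0:ℝ) := by
        funext t; simp [hf, hj]
      refine ⟨by rw [hzero]; exact integrableOn_zero, ?_⟩
      rw [hzero]; simp [hj]
    · have hfun : (fun t => f j t * f k t)
          = fun t => (c j * c k * (x j * x k)) * Real.exp (-((x j + x k) * t)) := by
        funext t; rw [hf]
        rw [show -((x j + x k) * t) = -(x j * t) + -(x k * t) by ring, Real.exp_add]
        ring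
      constructor
      · rw [hfun]
        have := (exp_neg_integrableOn_Ioi 0 h).const_mul (c j * c k * (x j * x k))
        exact this.congr (Filter.Eventually.of_forall fun t => by simp only []; rw [show -(x j + x k) * t = -((x j + x k) * t) by ring])
      · rw [hfun, integral_const_mul, my_integral_exp_neg_mul h]
        rw [mul_one_div, mul_div_assoc]
  have h1 : 0 ≤ ∫ t in Set.Ioi (0:ℝ), (∑ j, f j t)^2 :=
    setIntegral_nonneg measurableSet_Ioi (fun t _ => sq_nonneg _)
  have h2 : (fun t => (∑ j, f j t)^2) = fun t => ∑ j, ∑ k, f j t * f k t := by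
    funext t; rw [sq, Finset.sum_mul_sum]
  rw [h2] at h1
  have h3 : ∫ t in Set.Ioi (0:ℝ), ∑ j, ∑ k, f j t * f k t
      = ∑ j, ∑ k, ∫ t in Set.Ioi (0:ℝ), f j t * f k t := by
    rw [integral_finset_sum _ (fun j _ => integrable_finset_sum _ (fun k _ => (key j k).1))]
    exact Finset.sum_congr rfl fun j _ =>
      integral_finset_sum _ (fun k _ => (key j k).1)
  rw [h3] at h1
  calc (0:ℝ) ≤ _ := h1
    _ = _ := Finset.sum_congr rfl fun j _ => Finset.sum_congr rfl fun k _ => (key j k).2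


lemma fChi_eq {a b : ℝ} (ha : 0 ≤ a) (hb : 0 ≤ b) :
    fChi a b = a + b - 4 * (a * b / (a + b)) := by
  rcases eq_or_lt_of_le (add_nonneg ha hb) with h | h
  · have ha0 : a = 0 := by linarith
    have hb0 : b = 0 := by linarith
    simp [fChi, ha0, hb0]
  · rw [fChi]; field_simp; ring

lemma chiSq_eq {d : ℕ} {p q : Fin d → ℝ} (hp : p ∈ stdSimplex ℝ (Fin d))
    (hq : q ∈ stdSimplex ℝ (Fin d)) : chiSq p q = 2 - 4 * Sker p q := by
  have : chiSq p q = ∑ i, (p i + q i - 4 * (p i * q i / (p i + q i))) :=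
    Finset.sum_congr rfl fun i _ => fChi_eq (hp.1 i) (hq.1 i)
  rw [this]
  simp only [Finset.sum_sub_distrib, Finset.sum_add_distrib, ← Finset.mul_sum]
  rw [hp.2, hq.2, Sker]; ring

lemma Sker_self {d : ℕ} {p : Fin d → ℝ} (hp : p ∈ stdSimplex ℝ (Fin d)) :
    Sker p p = 1 / 2 := by
  have : Sker p p = ∑ i, p i / 2 := by
    refine Finset.sum_congr rfl fun i _ => ?_
    rcases eq_or_lt_of_le (hp.1 i) with h | h
    · simp [← h]
    · rw [show p i + p i = 2 * p i by ring, div_eq_div_iff (by positivity) two_ne_zero]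
      ring
  rw [this, ← Finset.sum_div, hp.2]

lemma Sker_comm {d : ℕ} (p q : Fin d → ℝ) : Sker p q = Sker q p := by
  unfold Sker
  exact Finset.sum_congr rfl fun i _ => by rw [mul_comm, add_comm]

lemma chiSq_nonneg {d : ℕ} {p q : Fin d → ℝ} (hp : ∀ i, 0 ≤ p i) (hq : ∀ i, 0 ≤ q i) :
    0 ≤ chiSq p q :=
  Finset.sum_nonneg fun i _ => div_nonneg (sq_nonneg _) (add_nonneg (hp i) (hq i))

/-- multiplicative `(1 ± ε)` embedding of `n` points of `Δ_d` under χ²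
into `ℓ₂²` of dimension `O(n²·d³/ε²)`. -/
theorem chiSq_multiplicative_embedding :
    ∃ C : ℝ, 0 < C ∧
      ∀ d n : ℕ, 1 ≤ d → 2 ≤ n → ∀ ε : ℝ, ε ∈ Set.Ioo (0 : ℝ) 1 →
        ∀ P : Finset (Fin d → ℝ),
          (∀ p ∈ P, p ∈ stdSimplex ℝ (Fin d)) → P.card = n →
          ∃ (m : ℕ) (φ : (Fin d → ℝ) → EuclideanSpace ℝ (Fin m)),
            (m : ℝ) ≤ C * (n : ℝ) ^ 2 * (d : ℝ) ^ 3 / ε ^ 2 ∧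
            ∀ p ∈ P, ∀ q ∈ P,
              (1 - ε) * chiSq p q ≤ ‖φ p - φ q‖ ^ 2 ∧
              ‖φ p - φ q‖ ^ 2 ≤ (1 + ε) * chiSq p q := by
  refine ⟨1, one_pos, fun d n hd hn ε hε P hP hcard => ?_⟩
  classical
  set e : {p // p ∈ P} ≃ Fin n := P.equivFinOfCardEq hcard with he
  set x : Fin n → (Fin d → ℝ) := fun j => (e.symm j : Fin d → ℝ) with hx
  have hxS : ∀ j, x j ∈ stdSimplex ℝ (Fin d) := fun j => hP _ (e.symm j).2
  set K : Matrix (Fin n) (Fin n) ℝ := Matrix.of (fun j k => Sker (x j) (x k)) with hK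
  have hKsd : K.PosSemidef := by
    rw [Matrix.posSemidef_iff_dotProduct_mulVec]
    constructor
    · ext j k
      simp only [hK, Matrix.conjTranspose_apply, Matrix.of_apply, star_trivial]
      exact Sker_comm _ _
    · intro c
      have e1 : dotProduct (star c) (K.mulVec c)
          = ∑ j, ∑ k, c j * c k * Sker (x j) (x k) := by
        simp only [star_trivial, dotProduct, Matrix.mulVec, hK, Matrix.of_apply,
          Finset.mul_sum]
        exact Finset.sum_congr rfl fun j _ => Finset.sum_congr rfl fun k _ => by ring
      have e2 : ∀ j k : Fin n, c j * c k * Sker (x j) (x k)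
          = ∑ i, c j * c k * (x j i * x k i / (x j i + x k i)) := by
        intro j k; rw [Sker, Finset.mul_sum]
      set F : Fin n → Fin n → Fin d → ℝ :=
        fun j k i => c j * c k * (x j i * x k i / (x j i + x k i)) with hF
      have e2' : ∀ j k : Fin n, c j * c k * Sker (x j) (x k) = ∑ i, F j k i := e2
      rw [e1]
      simp only [e2']
      have step1 : (∑ j, ∑ k, ∑ i, F j k i) = ∑ j, ∑ i, ∑ k, F j k i :=
        Finset.sum_congr rfl fun j _ => Finset.sum_comm
      have step2 : (∑ j, ∑ i, ∑ k, F j k i) = ∑ i, ∑ j, ∑ k, F j k i := Finset.sum_comm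
      rw [step1, step2]
      exact Finset.sum_nonneg fun i _ =>
        harmonic_psd (fun j => x j i) c (fun j => (hxS j).1 i)
  obtain ⟨B, hB⟩ : ∃ B : Matrix (Fin n) (Fin n) ℝ, K = star B * B := by
    open scoped MatrixOrder in exact CStarAlgebra.nonneg_iff_eq_star_mul_self.mp hKsd.nonneg
  have hKB : ∀ j k, K j k = ∑ l, B l j * B l k := by
    intro j k
    rw [hB]
    simp [Matrix.mul_apply, Matrix.conjTranspose_apply]
  refine ⟨n, fun p => if h : p ∈ P then
      (WithLp.equiv 2 (Fin n → ℝ)).symm (fun l => Real.sqrt 2 * B l (e ⟨p, h⟩)) else 0, ?_, ?_⟩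
  · have hd' : (1:ℝ) ≤ (d:ℝ) := by exact_mod_cast hd
    have hn' : (2:ℝ) ≤ (n:ℝ) := by exact_mod_cast hn
    have hε1 : 0 < ε := hε.1
    have hε2 : ε < 1 := hε.2
    have hd3 : (1:ℝ) ≤ (d:ℝ)^3 := one_le_pow₀ hd'
    rw [le_div_iff₀ (by positivity)]
    have hee : ε^2 ≤ 1 := by nlinarith
    have h1 : (n:ℝ) * ε^2 ≤ (n:ℝ) * 1 := mul_le_mul_of_nonneg_left hee (by positivity)
    have h2 : (n:ℝ) ≤ n^2 := by nlinarith [hn', sq_nonneg ((n:ℝ) - 1)]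
    have h3 : (n:ℝ)^2 * 1 ≤ (n:ℝ)^2 * (d:ℝ)^3 := mul_le_mul_of_nonneg_left hd3 (by positivity)
    nlinarith [h1, h2, h3]
  · intro p hp q hq
    beta_reduce
    rw [dif_pos hp, dif_pos hq]
    set j := e ⟨p, hp⟩ with hj
    set k := e ⟨q, hq⟩ with hk'
    have hxj : x j = p := by rw [hx]; simp [hj]
    have hxk : x k = q := by rw [hx]; simp [hk']
    have hnorm : ‖(WithLp.equiv 2 (Fin n → ℝ)).symm (fun l => Real.sqrt 2 * B l j)
        - (WithLp.equiv 2 (Fin n → ℝ)).symm (fun l => Real.sqrt 2 * B l k)‖ ^ 2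
        = ∑ l, (Real.sqrt 2 * B l j - Real.sqrt 2 * B l k)^2 := by
      rw [EuclideanSpace.norm_eq, Real.sq_sqrt (Finset.sum_nonneg fun l _ => sq_nonneg _)]
      refine Finset.sum_congr rfl fun l _ => ?_
      simp [Real.norm_eq_abs, sq_abs]
    rw [hnorm]
    have hsum : ∑ l, (Real.sqrt 2 * B l j - Real.sqrt 2 * B l k)^2
        = 2 * (K j j + K k k - 2 * K j k) := by
      simp only [hKB, Finset.mul_sum, ← Finset.sum_add_distrib, ← Finset.sum_sub_distrib]
      refine Finset.sum_congr rfl fun l _ => ?_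
      have h2 : Real.sqrt 2 ^ 2 = 2 := Real.sq_sqrt (by norm_num)
      nlinarith [h2]
    rw [hsum]
    have hKjj : K j j = 1/2 := Sker_self (hxj ▸ hxS j)
    have hKkk : K k k = 1/2 := Sker_self (hxk ▸ hxS k)
    have hKjk : K j k = Sker p q := by rw [hK]; simp [hxj, hxk]
    rw [hKjj, hKkk, hKjk]
    have hcs : chiSq p q = 2 - 4 * Sker p q := chiSq_eq (hP p hp) (hP q hq)
    have hg : 0 ≤ chiSq p q := chiSq_nonneg (hP p hp).1 (hP q hq).1
    constructor
    · nlinarith [hε.1, mul_nonneg hε.1.le hg]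
    · nlinarith [hε.1, mul_nonneg hε.1.le hg]
end

section
/- (Local Euclidean structure of f-divergences near the centroid) Let f : (0,∞) → ℝ be convex with f(1) = 0, f'(1) = 0, f''(1) > 0, and suppose f is twice differentiable on a neighborhood of 1 and the third derivative f'''(1) exists. Then for every integer k ≥ 1 and every ε ∈ (0,1) there exist r > 0 and t > 0 such that for all p, q ∈ Δ_k whose coordinates all lie in the interval [1/k − r, 1/k + r]: (1−ε)·‖p−q‖₂² ≤ t·D_f(p,q) ≤ (1+ε)·‖p−q‖₂². -/
open Real


lemma taylor2_bound (f : ℝ → ℝ) (hf1 : f 1 = 0) (hf'1 : deriv f 1 = 0)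
    (hsmooth : ∀ᶠ x in nhds (1 : ℝ),
      DifferentiableAt ℝ f x ∧ DifferentiableAt ℝ (deriv f) x)
    (hf'''1 : DifferentiableAt ℝ (deriv (deriv f)) 1)
    {δ : ℝ} (hδ : 0 < δ) :
    ∃ r₀ > (0:ℝ), ∀ u : ℝ, |u| ≤ r₀ →
      |f (1 + u) - deriv (deriv f) 1 / 2 * u ^ 2| ≤ δ * u ^ 2 := by
  set c := deriv (deriv f) 1 with hc
  have hcont : ContinuousAt (deriv (deriv f)) 1 := hf'''1.continuousAt
  have hev : ∀ᶠ x in nhds (1:ℝ), DifferentiableAt ℝ f x ∧ DifferentiableAt ℝ (deriv f) x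
      ∧ |deriv (deriv f) x - c| ≤ δ := by
    filter_upwards [hsmooth, hcont.eventually (Metric.closedBall_mem_nhds c hδ)] with x h1 h2
    exact ⟨h1.1, h1.2, by simpa [Real.dist_eq] using h2⟩
  rw [Metric.eventually_nhds_iff] at hev
  obtain ⟨ρ, hρ, hball⟩ := hev
  refine ⟨ρ/2, by linarith, ?_⟩
  intro u hu
  have key : ∀ v : ℝ, |v| ≤ ρ/2 →
      DifferentiableAt ℝ f (1+v) ∧ DifferentiableAt ℝ (deriv f) (1+v)
      ∧ |deriv (deriv f) (1+v) - c| ≤ δ := by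
    intro v hv
    apply hball
    rw [Real.dist_eq]
    have : |1 + v - 1| = |v| := by ring_nf
    rw [this]; linarith
  -- step 1 : bound on h v = deriv f (1+v) - c*v on Icc (-(ρ/2)) (ρ/2)
  have step1 : ∀ v : ℝ, |v| ≤ ρ/2 → |deriv f (1+v) - c*v| ≤ δ * |v| := by
    intro v hv
    have hmem : ∀ x ∈ Set.Icc (-(ρ/2)) (ρ/2), |x| ≤ ρ/2 := by
      intro x hx; rw [abs_le]; exact ⟨hx.1, hx.2⟩
    have := Convex.norm_image_sub_le_of_norm_hasDerivWithin_le
      (f := fun v => deriv f (1+v) - c*v) (f' := fun v => deriv (deriv f) (1+v) - c)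
      (s := Set.Icc (-(ρ/2)) (ρ/2)) (C := δ)
      (fun x hx => by
        have h1 : HasDerivAt (fun v : ℝ => deriv f (1+v)) (deriv (deriv f) (1+x)) x := by
          have := ((key x (hmem x hx)).2.1).hasDerivAt
          have h2 : HasDerivAt (fun v : ℝ => 1+v) 1 x := by
            simpa using (hasDerivAt_id x).const_add 1
          have h3 := this.comp x h2
          rw [mul_one] at h3
          exact h3
        exact ((h1.sub ((hasDerivAt_id x).const_mul c)).hasDerivWithinAt).congr_deriv (by ring))
      (fun x hx => by
        rw [Real.norm_eq_abs]; exact (key x (hmem x hx)).2.2)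
      (convex_Icc _ _)
      (x := 0) (y := v)
      (by constructor <;> linarith)
      (by rw [abs_le] at hv; exact ⟨hv.1, hv.2⟩)
    simpa [hf'1, Real.norm_eq_abs] using this
  -- step 2
  have hmem2 : ∀ x ∈ Set.uIcc (0:ℝ) u, |x| ≤ |u| := by
    intro x hx
    rcases Set.mem_uIcc.1 hx with h | h <;>
      · rw [abs_le]
        constructor <;> linarith [neg_abs_le u, le_abs_self u, abs_nonneg u, h.1, h.2]
  have := Convex.norm_image_sub_le_of_norm_hasDerivWithin_le
    (f := fun u => f (1+u) - c/2 * u^2) (f' := fun v => deriv f (1+v) - c*v)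
    (s := Set.uIcc (0:ℝ) u) (C := δ * |u|)
    (fun x hx => by
      have h1 : HasDerivAt (fun v : ℝ => f (1+v)) (deriv f (1+x)) x := by
        have := ((key x ((hmem2 x hx).trans hu)).1).hasDerivAt
        have h2 : HasDerivAt (fun v : ℝ => 1+v) 1 x := by
          simpa using (hasDerivAt_id x).const_add 1
        have h3 := this.comp x h2
        rw [mul_one] at h3
        exact h3
      have h3 : HasDerivAt (fun v : ℝ => c/2 * v^2) (c * x) x := by
        have := (hasDerivAt_pow 2 x).const_mul (c/2)
        simpa using this.congr_deriv (by ring)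
      exact ((h1.sub h3).hasDerivWithinAt))
    (fun x hx => by
      rw [Real.norm_eq_abs]
      calc |deriv f (1+x) - c*x| ≤ δ * |x| := step1 x ((hmem2 x hx).trans hu)
        _ ≤ δ * |u| := by have := hmem2 x hx; nlinarith)
    (convex_uIcc _ _) (x := 0) (y := u) Set.left_mem_uIcc Set.right_mem_uIcc
  have h0 : f (1 + (0:ℝ)) - c/2 * 0^2 = 0 := by simpa using hf1
  calc |f (1+u) - c/2 * u^2| = ‖(f (1+u) - c/2*u^2) - (f (1+(0:ℝ)) - c/2*0^2)‖ := by
        rw [h0, sub_zero, Real.norm_eq_abs]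
    _ ≤ δ * |u| * ‖u - 0‖ := this
    _ = δ * u^2 := by rw [sub_zero, Real.norm_eq_abs, mul_assoc, abs_mul_abs_self]; ring

/-- The `f`-divergence `D_f(p,q) = Σ_i p_i · f(q_i / p_i)` on the simplex `Δ_k`. -/
noncomputable def fDiv {k : ℕ} (f : ℝ → ℝ) (p q : Fin k → ℝ) : ℝ :=
  ∑ i, p i * f (q i / p i)

set_option maxHeartbeats 1000000 in
/-- a well-behaved `f`-divergence is `(1 ± ε)`-equivalent, after
rescaling by some `t > 0`, to squared Euclidean distance in a small ball of radius
`r` around the centroid of the simplex. -/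
theorem fDiv_locally_euclidean (f : ℝ → ℝ)
    (hconv : ConvexOn ℝ (Set.Ioi (0 : ℝ)) f)
    (hf1 : f 1 = 0)
    (hf'1 : deriv f 1 = 0)
    (hf''1 : 0 < deriv (deriv f) 1)
    (hsmooth : ∀ᶠ x in nhds (1 : ℝ),
      DifferentiableAt ℝ f x ∧ DifferentiableAt ℝ (deriv f) x)
    (hf'''1 : DifferentiableAt ℝ (deriv (deriv f)) 1) :
    ∀ k : ℕ, 1 ≤ k → ∀ ε : ℝ, ε ∈ Set.Ioo (0 : ℝ) 1 →
      ∃ r > (0 : ℝ), ∃ t > (0 : ℝ),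
        ∀ p ∈ stdSimplex ℝ (Fin k), ∀ q ∈ stdSimplex ℝ (Fin k),
          (∀ i, p i ∈ Set.Icc (1 / (k : ℝ) - r) (1 / (k : ℝ) + r)) →
          (∀ i, q i ∈ Set.Icc (1 / (k : ℝ) - r) (1 / (k : ℝ) + r)) →
          (1 - ε) * ∑ i, (p i - q i) ^ 2 ≤ t * fDiv f p q ∧
          t * fDiv f p q ≤ (1 + ε) * ∑ i, (p i - q i) ^ 2 := by
  intro k hk ε hε
  obtain ⟨hε0, hε1⟩ := hε
  set c := deriv (deriv f) 1 with hcdef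
  have hc0 : 0 < c := hf''1
  set K := (k : ℝ) with hKdef
  have hK1 : (1:ℝ) ≤ K := by rw [hKdef]; exact_mod_cast hk
  have hK0 : (0:ℝ) < K := by linarith
  have hδ0 : 0 < c * ε / 4 := by positivity
  obtain ⟨r₀, hr₀0, htay⟩ := taylor2_bound f hf1 hf'1 hsmooth hf'''1 hδ0
  set δ := c * ε / 4 with hδdef
  refine ⟨min (ε/(4*K)) (min (1/(4*K)) (r₀/(4*K))), by positivity, 2/(c*K), by positivity, ?_⟩
  set r := min (ε/(4*K)) (min (1/(4*K)) (r₀/(4*K))) with hrdef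
  have hr0 : 0 < r := by positivity
  have hcK0 : 0 < c * K := by positivity
  have hKr_ε : K * r ≤ ε/4 := by
    have h1 : r ≤ ε/(4*K) := min_le_left _ _
    have h2 : K * r ≤ K * (ε/(4*K)) := by nlinarith
    have h3 : K * (ε/(4*K)) = ε/4 := by field_simp
    linarith
  have hKr_r₀ : K * r ≤ r₀/4 := by
    have h1 : r ≤ r₀/(4*K) := le_trans (min_le_right _ _) (min_le_right _ _)
    have h2 : K * r ≤ K * (r₀/(4*K)) := by nlinarith
    have h3 : K * (r₀/(4*K)) = r₀/4 := by field_simp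
    linarith
  -- termwise lemma
  have term : ∀ a b : ℝ, a ∈ Set.Icc (1/K - r) (1/K + r) → b ∈ Set.Icc (1/K - r) (1/K + r) →
      (1-ε) * (a-b)^2 ≤ 2/(c*K) * (a * f (b/a)) ∧
      2/(c*K) * (a * f (b/a)) ≤ (1+ε) * (a-b)^2 := by
    intro a b ha hb
    have hKinv : K * (1/K) = 1 := by field_simp
    have hA : K * (1/K - r) ≤ K * a := mul_le_mul_of_nonneg_left ha.1 hK0.le
    have hB : K * a ≤ K * (1/K + r) := mul_le_mul_of_nonneg_left ha.2 hK0.le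
    rw [mul_sub, hKinv] at hA
    rw [mul_add, hKinv] at hB
    have hKa_lb : 1 - ε/4 ≤ K * a := by linarith
    have hKa_ub : K * a ≤ 1 + ε/4 := by linarith
    have ha0 : 0 < a := by
      rcases lt_or_ge 0 a with h | h
      · exact h
      · exfalso; nlinarith [mul_nonpos_of_nonneg_of_nonpos hK0.le h]
    have hd : |b - a| ≤ 2 * r := by
      rw [abs_le]; constructor <;> [linarith [ha.2, hb.1]; linarith [ha.1, hb.2]]
    have hu_abs : |(b - a)/a| ≤ r₀ := by
      rw [abs_div, abs_of_pos ha0, div_le_iff₀ ha0]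
      have h1 : 2 * r ≤ r₀ * a := by
        nlinarith [mul_le_mul_of_nonneg_left hKa_lb hr₀0.le, hKr_r₀, hr0, hK0]
      linarith [hd]
    have hfb := htay ((b-a)/a) hu_abs
    rw [show (1 + (b-a)/a) = b/a by field_simp; ring] at hfb
    set F := f (b/a) with hFdef
    have habs := abs_le.1 hfb
    have hu2 : ((b-a)/a)^2 * a^2 = (b-a)^2 := by field_simp
    have hlow : (c/2 - δ) * (b-a)^2 ≤ F * a^2 := by
      have h1 : (c/2 - δ) * ((b-a)/a)^2 ≤ F := by linarith [habs.1]
      have h2 := mul_le_mul_of_nonneg_right h1 (sq_nonneg a)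
      calc (c/2 - δ) * (b-a)^2 = (c/2 - δ) * (((b-a)/a)^2 * a^2) := by rw [hu2]
        _ = (c/2 - δ) * ((b-a)/a)^2 * a^2 := by ring
        _ ≤ F * a^2 := h2
    have hhigh : F * a^2 ≤ (c/2 + δ) * (b-a)^2 := by
      have h1 : F ≤ (c/2 + δ) * ((b-a)/a)^2 := by linarith [habs.2]
      have h2 := mul_le_mul_of_nonneg_right h1 (sq_nonneg a)
      calc F * a^2 ≤ (c/2 + δ) * ((b-a)/a)^2 * a^2 := h2
        _ = (c/2 + δ) * (((b-a)/a)^2 * a^2) := by ring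
        _ = (c/2 + δ) * (b-a)^2 := by rw [hu2]
    constructor
    · rw [div_mul_eq_mul_div, le_div_iff₀ hcK0]
      have key : ((1-ε) * (a-b)^2 * (c*K)) * a ≤ (2 * (a * F)) * a := by
        nlinarith [hlow, hKa_ub,
          mul_le_mul_of_nonneg_left hKa_ub
            (mul_nonneg (mul_nonneg (by linarith : (0:ℝ) ≤ 1-ε) hc0.le) (sq_nonneg (b-a))),
          mul_nonneg (mul_nonneg hc0.le (sq_nonneg (b-a))) hε0.le,
          mul_nonneg (mul_nonneg hc0.le (sq_nonneg (b-a)))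
            (mul_nonneg hε0.le hε0.le)]
      exact (mul_le_mul_iff_of_pos_right ha0).1 key
    · rw [div_mul_eq_mul_div, div_le_iff₀ hcK0]
      have key : (2 * (a * F)) * a ≤ ((1+ε) * (a-b)^2 * (c*K)) * a := by
        nlinarith [hhigh, hKa_lb,
          mul_le_mul_of_nonneg_left hKa_lb
            (mul_nonneg (mul_nonneg (by linarith : (0:ℝ) ≤ 1+ε) hc0.le) (sq_nonneg (b-a))),
          mul_nonneg (mul_nonneg hc0.le (sq_nonneg (b-a)))
            (mul_nonneg hε0.le (by linarith : (0:ℝ) ≤ 1-ε))]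
      exact (mul_le_mul_iff_of_pos_right ha0).1 key
  intro p _ q _ hp hq
  have hsum : ∀ i : Fin k, (1-ε) * (p i - q i)^2 ≤ 2/(c*K) * (p i * f (q i / p i)) ∧
      2/(c*K) * (p i * f (q i / p i)) ≤ (1+ε) * (p i - q i)^2 := by
    intro i
    exact term (p i) (q i) (by simpa [hKdef] using hp i) (by simpa [hKdef] using hq i)
  rw [fDiv]
  constructor
  · calc (1-ε) * ∑ i, (p i - q i)^2 = ∑ i, (1-ε)*(p i - q i)^2 := Finset.mul_sum _ _ _
      _ ≤ ∑ i, 2/(c*K) * (p i * f (q i / p i)) := Finset.sum_le_sum fun i _ => (hsum i).1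
      _ = 2/(c*K) * ∑ i, p i * f (q i / p i) := (Finset.mul_sum _ _ _).symm
  · calc 2/(c*K) * ∑ i, p i * f (q i / p i)
        = ∑ i, 2/(c*K) * (p i * f (q i / p i)) := Finset.mul_sum _ _ _
      _ ≤ ∑ i, (1+ε)*(p i - q i)^2 := Finset.sum_le_sum fun i _ => (hsum i).2
      _ = (1+ε) * ∑ i, (p i - q i)^2 := (Finset.mul_sum _ _ _).symm
end
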